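/- Let C be a d-clutter on a finite vertex set V with C not complete, Δ = ⟨C⟩, and let v be a shedding vertex of Γ = ⟨C^∨⟩. Set D = Facets(link_Δ(v)). If the (d−1)-clutter D is chordal, then there is a sequence e_1, …, e_t with e_i ∈ SMS(C_{i−1}), where C_0 = C and C_i = C_{i−1} − e_i, such that the circuits of C_t are exactly the circuits of C not containing v. -/
import Mathlib


namespace ClutterPaper

variable {α : Type*} [DecidableEq α]

/-- `C` is a uniform clutter on vertex set `V` all of whose circuits have cardinality `c`
(i.e. a `(c-1)`-dimensional uniform clutter). -/
def IsClutter (V : Finset α) (c : ℕ) (C : Finset (Finset α)) : Prop :=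
  ∀ F ∈ C, F ⊆ V ∧ F.card = c

/-- The complement clutter `C̄`: all `c`-subsets of `V` not in `C`. -/
def compClutter (V : Finset α) (c : ℕ) (C : Finset (Finset α)) : Finset (Finset α) :=
  V.powersetCard c \ C

/-- `C^∨ = { V \ F | F ∈ C̄ }`. -/
def clutterDual (V : Finset α) (c : ℕ) (C : Finset (Finset α)) : Finset (Finset α) :=
  (compClutter V c C).image fun F => V \ F

/-- `A` is a clique of the clutter `C` (with circuit cardinality `c`) on vertex set `V`:
all `c`-subsets of `A` are circuits. -/
def IsClique (V : Finset α) (c : ℕ) (C : Finset (Finset α)) (A : Finset α) : Prop :=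
  A ⊆ V ∧ ∀ F ⊆ A, F.card = c → F ∈ C

/-- The closed neighborhood `N_C[e] = e ∪ { v ∈ V | e ∪ {v} ∈ C }`. -/
def closedNbhd (V : Finset α) (C : Finset (Finset α)) (e : Finset α) : Finset α :=
  e ∪ V.filter fun v => insert v e ∈ C

/-- `e` is a maximal subcircuit of the clutter `C` with circuit cardinality `c`:
`e` has cardinality `c - 1` and is contained in some circuit. -/
def IsMS (c : ℕ) (C : Finset (Finset α)) (e : Finset α) : Prop :=
  e.card + 1 = c ∧ ∃ F ∈ C, e ⊆ F

/-- `e` is a simplicial maximal subcircuit: a maximal subcircuit whose closed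
neighborhood is a clique. -/
def IsSMS (V : Finset α) (c : ℕ) (C : Finset (Finset α)) (e : Finset α) : Prop :=
  IsMS c C e ∧ IsClique V c C (closedNbhd V C e)

/-- `e` is a free maximal subcircuit: contained in exactly one circuit. -/
def IsFreeMS (c : ℕ) (C : Finset (Finset α)) (e : Finset α) : Prop :=
  e.card + 1 = c ∧ ∃! F, F ∈ C ∧ e ⊆ F

/-- Deletion `C − e` of a maximal subcircuit: the circuits not containing `e`. -/
def delMS (C : Finset (Finset α)) (e : Finset α) : Finset (Finset α) :=
  C.filter fun F => ¬ e ⊆ F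

/-- Deletion of a vertex: circuits (or faces) not containing `v`. -/
def delVert (C : Finset (Finset α)) (v : α) : Finset (Finset α) :=
  C.filter fun F => v ∉ F

/-- Chordality of a uniform clutter (circuit cardinality `c`) on `V`: there is a sequence of
deletions of simplicial maximal subcircuits ending in the clutter with no circuits. -/
inductive Chordal (V : Finset α) (c : ℕ) : Finset (Finset α) → Prop
  | empty : Chordal V c ∅
  | step {C : Finset (Finset α)} (e : Finset α) :
      IsSMS V c C e → Chordal V c (delMS C e) → Chordal V c C

/-- The ascent `C⁺` of a clutter with circuit cardinality `c`: all `(c+1)`-subsets of `V`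
that are cliques of `C`. -/
def ascent (V : Finset α) (c : ℕ) (C : Finset (Finset α)) : Finset (Finset α) :=
  (V.powersetCard (c + 1)).filter fun A => A.powersetCard c ⊆ C

/-- The simplicial complex `⟨D⟩` generated by a clutter `D`: all subsets of its elements. -/
def complexOf (D : Finset (Finset α)) : Finset (Finset α) :=
  D.biUnion Finset.powerset

/-- A family of finsets is a simplicial complex if it is downward closed. -/
def IsComplex (Δ : Finset (Finset α)) : Prop :=
  ∀ F ∈ Δ, ∀ G ⊆ F, G ∈ Δ

/-- The facets (maximal faces) of a simplicial complex. -/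
def facets (Δ : Finset (Finset α)) : Finset (Finset α) :=
  Δ.filter fun F => ∀ G ∈ Δ, F ⊆ G → F = G

/-- `link_Δ(v) = { F \ {v} | v ∈ F ∈ Δ }`. -/
def link (Δ : Finset (Finset α)) (v : α) : Finset (Finset α) :=
  (Δ.filter fun F => v ∈ F).image fun F => F.erase v

/-- `v` is a shedding vertex of `Δ`: no face of `link_Δ(v)` is a facet of `Δ − v`. -/
def Shedding (Δ : Finset (Finset α)) (v : α) : Prop :=
  ∀ F ∈ link Δ v, F ∉ facets (delVert Δ v)

/-- Alexander dual of a simplicial complex on vertex set `V`: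
`Δ^∨ = { V \ F | F ⊆ V, F ∉ Δ }`. -/
def alexDual (V : Finset α) (Δ : Finset (Finset α)) : Finset (Finset α) :=
  (V.powerset.filter fun F => F ∉ Δ).image fun F => V \ F

/-- `Δ` is pure with all facets of cardinality `c` (dimension `c - 1`), and nonempty. -/
def PureDim (Δ : Finset (Finset α)) (c : ℕ) : Prop :=
  Δ.Nonempty ∧ ∀ F ∈ facets Δ, F.card = c

/-- Vertex decomposability of a simplicial complex. -/
inductive VDecomp : Finset (Finset α) → Prop
  | simplex {Δ : Finset (Finset α)} : (facets Δ).card = 1 → VDecomp Δ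
  | shed {Δ : Finset (Finset α)} (v : α) : Shedding Δ v →
      VDecomp (link Δ v) → VDecomp (delVert Δ v) → VDecomp Δ

/-- The vertex set of a clutter (or of the complex it generates). -/
def vertexSet (Ω : Finset (Finset α)) : Finset α :=
  Ω.biUnion id

/-- `Ω` (given by its set of facets, each of cardinality `d+1`) is a `d`-cycle:
nonempty, pure of dimension `d`, `d`-path connected, and every `(d-1)`-dimensional
face lies in an even number of `d`-faces. -/
def IsCycle (d : ℕ) (Ω : Finset (Finset α)) : Prop :=
  Ω.Nonempty ∧ (∀ F ∈ Ω, F.card = d + 1) ∧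
    (∀ F ∈ Ω, ∀ G ∈ Ω,
      Relation.ReflTransGen (fun A B => A ∈ Ω ∧ B ∈ Ω ∧ (A ∩ B).card = d) F G) ∧
    ∀ e : Finset α, e.card = d → Even ((Ω.filter fun F => e ⊆ F).card)

/-- A face-minimal `d`-cycle: no `d`-cycle has a strictly smaller set of `d`-faces. -/
def FaceMinimalCycle (d : ℕ) (Ω : Finset (Finset α)) : Prop :=
  IsCycle d Ω ∧ ∀ Ω' : Finset (Finset α), IsCycle d Ω' → Ω' ⊆ Ω → Ω' = Ω

/-- `Ω` is `d`-complete: it contains every `(d+1)`-subset of its vertex set. -/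
def DComplete (d : ℕ) (Ω : Finset (Finset α)) : Prop :=
  ∀ F ⊆ vertexSet Ω, F.card = d + 1 → F ∈ Ω

/-- The complex `⟨C⟩` generated by the `d`-dimensional clutter `C` is `d`-chorded. -/
def Chorded (d : ℕ) (C : Finset (Finset α)) : Prop :=
  ∀ Ω : Finset (Finset α), FaceMinimalCycle d Ω → Ω ⊆ C → ¬ DComplete d Ω →
    ∃ (k : ℕ) (Ωs : Fin k → Finset (Finset α)), 2 ≤ k ∧
      (∀ i, IsCycle d (Ωs i) ∧ Ωs i ⊆ C) ∧
      (∀ F ∈ Ω, ∃ i, F ∈ Ωs i) ∧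
      (∀ F ∈ Ω, Odd ((Finset.univ.filter fun i => F ∈ Ωs i).card)) ∧
      (∀ F : Finset α, (∃ i, F ∈ Ωs i) → F ∉ Ω →
        Even ((Finset.univ.filter fun i => F ∈ Ωs i).card)) ∧
      ∀ i, vertexSet (Ωs i) ⊂ vertexSet Ω

/-- The circuits of `D` admit an admissible order. -/
def HasAdmissibleOrder (D : Finset (Finset α)) : Prop :=
  ∃ (t : ℕ) (F : Fin t → Finset α), Function.Injective F ∧
    (∀ G, G ∈ D ↔ ∃ i, F i = G) ∧
    ∀ i j : Fin t, j < i →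
      ∃ l ∈ F j \ F i, ∃ k : Fin t, k < i ∧ F k \ F i = {l}

/-- Contraction `D/v` of a (not necessarily uniform) clutter: the minimal sets of
`{ e \ {v} | e ∈ D }`. -/
def contractAux (D : Finset (Finset α)) (v : α) : Finset (Finset α) :=
  D.image fun e => e.erase v

def contract (D : Finset (Finset α)) (v : α) : Finset (Finset α) :=
  (contractAux D v).filter fun e => ∀ f ∈ contractAux D v, f ⊆ e → f = e

/-- `D` has a simplicial vertex (trivially true if `D` has no vertices). -/
def HasSimpVertex (D : Finset (Finset α)) : Prop :=
  vertexSet D = ∅ ∨ ∃ v ∈ vertexSet D, ∀ e₁ ∈ D, ∀ e₂ ∈ D, v ∈ e₁ → v ∈ e₂ →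
    ∃ e₃ ∈ D, e₃ ⊆ (e₁ ∪ e₂).erase v

/-- `D` is W-chordal: every clutter obtained from `D` by a sequence of vertex deletions
and contractions has a simplicial vertex. -/
def WChordal (D : Finset (Finset α)) : Prop :=
  ∀ D' : Finset (Finset α),
    Relation.ReflTransGen (fun X Y => ∃ v, Y = delVert X v ∨ Y = contract X v) D D' →
    HasSimpVertex D'

lemma mem_complexOf {D : Finset (Finset α)} {X : Finset α} :
    X ∈ complexOf D ↔ ∃ H ∈ D, X ⊆ H := by
  simp [complexOf]

lemma mem_facets_link_iff (V : Finset α) (d : ℕ) (C : Finset (Finset α))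
    (hC : IsClutter V (d + 1) C) (v : α) (f : Finset α) :
    f ∈ facets (link (complexOf C) v) ↔ v ∉ f ∧ insert v f ∈ C := by
  constructor
  · rintro hf
    rw [facets, Finset.mem_filter] at hf
    obtain ⟨hf1, hf2⟩ := hf
    rw [link, Finset.mem_image] at hf1
    obtain ⟨H, hH, rfl⟩ := hf1
    rw [Finset.mem_filter] at hH
    obtain ⟨hHc, hvH⟩ := hH
    rw [mem_complexOf] at hHc
    obtain ⟨F, hF, hHF⟩ := hHc
    have hvF : v ∈ F := hHF hvH
    have hFl : F.erase v ∈ link (complexOf C) v := by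
      rw [link, Finset.mem_image]
      exact ⟨F, Finset.mem_filter.2 ⟨mem_complexOf.2 ⟨F, hF, subset_rfl⟩, hvF⟩, rfl⟩
    have heq := hf2 _ hFl (Finset.erase_subset_erase v hHF)
    refine ⟨Finset.notMem_erase v H, ?_⟩
    rw [heq, Finset.insert_erase hvF]
    exact hF
  · rintro ⟨hvf, hfC⟩
    rw [facets, Finset.mem_filter]
    have hfl : f ∈ link (complexOf C) v := by
      rw [link, Finset.mem_image]
      refine ⟨insert v f, Finset.mem_filter.2
        ⟨mem_complexOf.2 ⟨_, hfC, subset_rfl⟩, Finset.mem_insert_self v f⟩, ?_⟩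
      rw [Finset.erase_insert hvf]
    refine ⟨hfl, ?_⟩
    intro g hg hfg
    rw [link, Finset.mem_image] at hg
    obtain ⟨H, hH, rfl⟩ := hg
    rw [Finset.mem_filter] at hH
    obtain ⟨hHc, hvH⟩ := hH
    rw [mem_complexOf] at hHc
    obtain ⟨F, hF, hHF⟩ := hHc
    have h1 : insert v f ⊆ F := by
      rw [Finset.insert_subset_iff]
      exact ⟨hHF hvH, hfg.trans ((Finset.erase_subset v H).trans hHF)⟩
    have h2 : insert v f = F :=
      Finset.eq_of_subset_of_card_le h1
        (le_of_eq (by rw [(hC F hF).2, (hC _ hfC).2]))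
    apply Finset.Subset.antisymm hfg
    intro x hx
    rcases Finset.mem_erase.1 hx with ⟨hxv, hxH⟩
    have hxm : x ∈ insert v f := h2 ▸ hHF hxH
    rcases Finset.mem_insert.1 hxm with h | h
    · exact absurd h hxv
    · exact h

lemma decomp (V : Finset α) (d : ℕ) (C : Finset (Finset α))
    (hC : IsClutter V (d + 1) C) (v : α) :
    C = delVert C v ∪ (facets (link (complexOf C) v)).image (insert v) := by
  ext F
  simp only [Finset.mem_union, delVert, Finset.mem_filter, Finset.mem_image]
  constructor
  · intro hF
    by_cases hvF : v ∈ F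
    · right
      refine ⟨F.erase v, ?_, Finset.insert_erase hvF⟩
      rw [mem_facets_link_iff V d C hC]
      exact ⟨Finset.notMem_erase v F, by rw [Finset.insert_erase hvF]; exact hF⟩
    · exact Or.inl ⟨hF, hvF⟩
  · rintro (⟨hF, _⟩ | ⟨f, hf, rfl⟩)
    · exact hF
    · exact ((mem_facets_link_iff V d C hC v f).1 hf).2

lemma shed_clique (V : Finset α) (d : ℕ) (C : Finset (Finset α))
    (hC : IsClutter V (d + 1) C) (v : α) (hv : v ∈ V)
    (hshed : Shedding (complexOf (clutterDual V (d + 1) C)) v)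
    (F : Finset α) (hFV : F ⊆ V) (hvF : v ∉ F) (hcard : F.card = d + 1)
    (hall : ∀ f ⊆ F, f.card = d → insert v f ∈ C) : F ∈ C := by
  by_contra hFC
  set Γ := complexOf (clutterDual V (d + 1) C) with hΓ
  set G := (V.erase v) \ F with hG
  have hvG : v ∉ G := fun h => (Finset.mem_erase.1 (Finset.mem_sdiff.1 h).1).1 rfl
  have hFcomp : F ∈ compClutter V (d + 1) C := by
    rw [compClutter, Finset.mem_sdiff, Finset.mem_powersetCard]
    exact ⟨⟨hFV, hcard⟩, hFC⟩
  have hdual : V \ F ∈ clutterDual V (d + 1) C := by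
    rw [clutterDual, Finset.mem_image]; exact ⟨F, hFcomp, rfl⟩
  have hins : insert v G ∈ Γ := by
    rw [hΓ, mem_complexOf]
    refine ⟨V \ F, hdual, ?_⟩
    rw [Finset.insert_subset_iff]
    refine ⟨Finset.mem_sdiff.2 ⟨hv, hvF⟩, fun x hx => ?_⟩
    obtain ⟨hx1, hx2⟩ := Finset.mem_sdiff.1 hx
    exact Finset.mem_sdiff.2 ⟨(Finset.mem_erase.1 hx1).2, hx2⟩
  have hGlink : G ∈ link Γ v := by
    rw [link, Finset.mem_image]
    exact ⟨insert v G, Finset.mem_filter.2 ⟨hins, Finset.mem_insert_self _ _⟩,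
      Finset.erase_insert hvG⟩
  have hnotfacet := hshed G hGlink
  have hGmem : G ∈ delVert Γ v := by
    rw [delVert, Finset.mem_filter]
    refine ⟨?_, hvG⟩
    rw [hΓ, mem_complexOf] at hins ⊢
    obtain ⟨H, hH, hsub⟩ := hins
    exact ⟨H, hH, (Finset.subset_insert v G).trans hsub⟩
  rw [facets, Finset.mem_filter] at hnotfacet
  push_neg at hnotfacet
  obtain ⟨H, hH, hGH, hne⟩ := hnotfacet hGmem
  rw [delVert, Finset.mem_filter] at hH
  obtain ⟨hHΓ, hvH⟩ := hH
  obtain ⟨w, hwH, hwG⟩ := Finset.exists_of_ssubset (hGH.ssubset_of_ne hne)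
  rw [hΓ, mem_complexOf] at hHΓ
  obtain ⟨X, hX, hHX⟩ := hHΓ
  rw [clutterDual, Finset.mem_image] at hX
  obtain ⟨F'', hF'', rfl⟩ := hX
  rw [compClutter, Finset.mem_sdiff, Finset.mem_powersetCard] at hF''
  obtain ⟨⟨hF''V, hF''card⟩, hF''C⟩ := hF''
  have hHF'' : ∀ x ∈ H, x ∉ F'' := fun x hx hx' => (Finset.mem_sdiff.1 (hHX hx)).2 hx'
  have hwV : w ∈ V := (Finset.mem_sdiff.1 (hHX hwH)).1
  have hwv : w ≠ v := fun h => hvH (h ▸ hwH)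
  have hwF : w ∈ F := by
    by_contra hwF
    exact hwG (Finset.mem_sdiff.2 ⟨Finset.mem_erase.2 ⟨hwv, hwV⟩, hwF⟩)
  have hkey : F'' ⊆ insert v (F.erase w) := by
    intro x hx
    rcases eq_or_ne x v with rfl | hxv
    · exact Finset.mem_insert_self _ _
    · have hxV : x ∈ V := hF''V hx
      have hxF : x ∈ F := by
        by_contra hxF
        have hxG : x ∈ G := Finset.mem_sdiff.2 ⟨Finset.mem_erase.2 ⟨hxv, hxV⟩, hxF⟩
        exact hHF'' x (hGH hxG) hx
      have hxw : x ≠ w := by rintro rfl; exact hHF'' x hwH hx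
      exact Finset.mem_insert_of_mem (Finset.mem_erase.2 ⟨hxw, hxF⟩)
  have hcard2 : (insert v (F.erase w)).card = d + 1 := by
    rw [Finset.card_insert_of_notMem (fun h => hvF (Finset.erase_subset w F h)),
      Finset.card_erase_of_mem hwF, hcard]
    omega
  have heq : F'' = insert v (F.erase w) :=
    Finset.eq_of_subset_of_card_le hkey (le_of_eq (by rw [hcard2, hF''card]))
  apply hF''C
  rw [heq]
  exact hall (F.erase w) (Finset.erase_subset w F)
    (by rw [Finset.card_erase_of_mem hwF, hcard]; omega)

lemma delMS_lift (C : Finset (Finset α)) (v : α) (D' : Finset (Finset α)) (e : Finset α)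
    (hve : v ∉ e) :
    delMS (delVert C v ∪ D'.image (insert v)) (insert v e)
      = delVert C v ∪ (delMS D' e).image (insert v) := by
  ext F
  simp only [delMS, delVert, Finset.mem_filter, Finset.mem_union, Finset.mem_image]
  constructor
  · rintro ⟨(⟨hF, hvF⟩ | ⟨f, hf, rfl⟩), hns⟩
    · exact Or.inl ⟨hF, hvF⟩
    · exact Or.inr ⟨f, ⟨hf, fun hef => hns (Finset.insert_subset_insert v hef)⟩, rfl⟩
  · rintro (⟨hF, hvF⟩ | ⟨f, ⟨hf, hef⟩, rfl⟩)
    · exact ⟨Or.inl ⟨hF, hvF⟩, fun hs => hvF (hs (Finset.mem_insert_self v e))⟩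
    · refine ⟨Or.inr ⟨f, hf, rfl⟩, fun hs => hef ?_⟩
      intro x hx
      rcases Finset.mem_insert.1 (hs (Finset.mem_insert_of_mem hx)) with rfl | h
      · exact absurd hx hve
      · exact h

lemma sms_lift (V : Finset α) (d : ℕ) (C : Finset (Finset α))
    (hC : IsClutter V (d + 1) C) (v : α) (hv : v ∈ V)
    (hshed : Shedding (complexOf (clutterDual V (d + 1) C)) v)
    (D' : Finset (Finset α)) (hsub : D' ⊆ facets (link (complexOf C) v))
    (e : Finset α) (hsms : IsSMS (V.erase v) d D' e) :
    IsSMS V (d + 1) (delVert C v ∪ D'.image (insert v)) (insert v e) := by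
  set C' := delVert C v ∪ D'.image (insert v) with hC'
  have hD₀ : ∀ f ∈ D', v ∉ f ∧ insert v f ∈ C := fun f hf =>
    (mem_facets_link_iff V d C hC v f).1 (hsub hf)
  obtain ⟨⟨hecard, f₀, hf₀, hef₀⟩, hclq⟩ := hsms
  have hvf₀ : v ∉ f₀ := (hD₀ f₀ hf₀).1
  have hve : v ∉ e := fun h => hvf₀ (hef₀ h)
  have hvmem : ∀ F ∈ C', v ∈ F → ∃ f ∈ D', F = insert v f := by
    intro F hF hvF
    rcases Finset.mem_union.1 hF with h | h
    · exact absurd hvF (Finset.mem_filter.1 h).2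
    · obtain ⟨f, hf, rfl⟩ := Finset.mem_image.1 h
      exact ⟨f, hf, rfl⟩
  have hN : closedNbhd V C' (insert v e) = insert v (closedNbhd (V.erase v) D' e) := by
    ext x
    simp only [closedNbhd, Finset.mem_union, Finset.mem_insert, Finset.mem_filter,
      Finset.mem_erase]
    constructor
    · rintro ((rfl | hx) | ⟨hxV, hxC⟩)
      · exact Or.inl rfl
      · exact Or.inr (Or.inl hx)
      · rcases eq_or_ne x v with rfl | hxv
        · exact Or.inl rfl
        · by_cases hxe : x ∈ e
          · exact Or.inr (Or.inl hxe)
          · obtain ⟨f, hf, hfe⟩ := hvmem _ hxC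
              (Finset.mem_insert_of_mem (Finset.mem_insert_self v e))
            have hfeq : insert x e = f := by
              have h1 : insert v (insert x e) = insert v f := by
                rw [Finset.insert_comm]; exact hfe
              have hvne : v ∉ insert x e := by
                simp only [Finset.mem_insert]
                rintro (rfl | h)
                · exact hxv rfl
                · exact hve h
              calc insert x e = (insert v (insert x e)).erase v :=
                    (Finset.erase_insert hvne).symm
                _ = (insert v f).erase v := by rw [h1]
                _ = f := Finset.erase_insert (hD₀ f hf).1
            exact Or.inr (Or.inr ⟨⟨hxv, hxV⟩, hfeq ▸ hf⟩)
    · rintro (rfl | hx | ⟨⟨hxv, hxV⟩, hxD⟩)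
      · exact Or.inl (Or.inl rfl)
      · exact Or.inl (Or.inr hx)
      · refine Or.inr ⟨hxV, ?_⟩
        rw [Finset.insert_comm]
        exact Finset.mem_union_right _ (Finset.mem_image_of_mem _ hxD)
  obtain ⟨hclqV, hclqmem⟩ := hclq
  refine ⟨⟨?_, insert v f₀, Finset.mem_union_right _ (Finset.mem_image_of_mem _ hf₀),
      Finset.insert_subset_insert v hef₀⟩, ?_⟩
  · rw [Finset.card_insert_of_notMem hve, hecard]
  · rw [hN]
    constructor
    · rw [Finset.insert_subset_iff]
      exact ⟨hv, hclqV.trans (Finset.erase_subset v V)⟩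
    · intro F hFA hFcard
      by_cases hvF : v ∈ F
      · have hsub2 : F.erase v ⊆ closedNbhd (V.erase v) D' e := by
          intro x hx
          obtain ⟨hxv, hxF⟩ := Finset.mem_erase.1 hx
          rcases Finset.mem_insert.1 (hFA hxF) with h | h
          · exact absurd h hxv
          · exact h
        have hcardev : (F.erase v).card = d := by
          rw [Finset.card_erase_of_mem hvF, hFcard]
          omega
        have hmem := hclqmem _ hsub2 hcardev
        have hFeq : F = insert v (F.erase v) := (Finset.insert_erase hvF).symm
        rw [hFeq]
        exact Finset.mem_union_right _ (Finset.mem_image_of_mem _ hmem)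
      · have hsub2 : F ⊆ closedNbhd (V.erase v) D' e := by
          intro x hx
          rcases Finset.mem_insert.1 (hFA hx) with rfl | h
          · exact absurd hx hvF
          · exact h
        have hFC : F ∈ C := by
          apply shed_clique V d C hC v hv hshed F
            (hsub2.trans (hclqV.trans (Finset.erase_subset v V))) hvF hFcard
          intro f hfF hfcard
          exact (hD₀ f (hclqmem f (hfF.trans hsub2) hfcard)).2
        exact Finset.mem_union_left _ (Finset.mem_filter.2 ⟨hFC, hvF⟩)

lemma lift_chordal (V : Finset α) (d : ℕ) (C : Finset (Finset α))
    (hC : IsClutter V (d + 1) C) (v : α) (hv : v ∈ V)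
    (hshed : Shedding (complexOf (clutterDual V (d + 1) C)) v) :
    ∀ D' : Finset (Finset α), Chordal (V.erase v) d D' →
      D' ⊆ facets (link (complexOf C) v) →
      ∃ (t : ℕ) (es : Fin t → Finset α) (Cs : Fin (t + 1) → Finset (Finset α)),
        Cs 0 = delVert C v ∪ D'.image (insert v) ∧
        (∀ i : Fin t, IsSMS V (d + 1) (Cs i.castSucc) (es i) ∧
          Cs i.succ = delMS (Cs i.castSucc) (es i)) ∧
        Cs (Fin.last t) = delVert C v := by
  intro D' hch
  induction hch with
  | empty =>
      intro _
      exact ⟨0, Fin.elim0, fun _ => delVert C v, by simp, fun i => i.elim0, rfl⟩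
  | @step D' e hsms hch ih =>
      intro hsub
      obtain ⟨t, es, Cs, h0, hstep, hlast⟩ := ih ((Finset.filter_subset _ _).trans hsub)
      have hve : v ∉ e := by
        obtain ⟨⟨_, f₀, hf₀, hef₀⟩, _⟩ := hsms
        exact fun h => ((mem_facets_link_iff V d C hC v f₀).1 (hsub hf₀)).1 (hef₀ h)
      refine ⟨t + 1, Fin.cases (insert v e) es,
        Fin.cases (delVert C v ∪ D'.image (insert v)) Cs, by simp, ?_, ?_⟩
      · intro i
        induction i using Fin.cases with
        | zero =>
          simp only [Fin.castSucc_zero, Fin.cases_zero, Fin.cases_succ]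
          refine ⟨sms_lift V d C hC v hv hshed D' hsub e hsms, ?_⟩
          rw [h0, delMS_lift C v D' e hve]
        | succ j =>
          simp only [← Fin.succ_castSucc, Fin.cases_succ]
          exact hstep j
      · simp only [← Fin.succ_last, Fin.cases_succ]
        exact hlast

/-- With `C` a non-complete `d`-clutter on `V`, `v` a shedding vertex of
`Γ = ⟨C^∨⟩`, and `D = Facets(link_{⟨C⟩}(v))` chordal, there is a sequence `e_1, …, e_t` with
`e_i ∈ SMS(C_{i−1})`, `C_0 = C`, `C_i = C_{i−1} − e_i`, such that the circuits of `C_t` are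
exactly the circuits of `C` not containing `v`. -/
theorem ver_del (V : Finset α) (d : ℕ) (C : Finset (Finset α))
    (hC : IsClutter V (d + 1) C) (hnc : C ≠ V.powersetCard (d + 1))
    (v : α) (hv : v ∈ V)
    (hshed : Shedding (complexOf (clutterDual V (d + 1) C)) v)
    (hD : Chordal (V.erase v) d (facets (link (complexOf C) v))) :
    ∃ (t : ℕ) (es : Fin t → Finset α) (Cs : Fin (t + 1) → Finset (Finset α)),
      Cs 0 = C ∧
      (∀ i : Fin t, IsSMS V (d + 1) (Cs i.castSucc) (es i) ∧
        Cs i.succ = delMS (Cs i.castSucc) (es i)) ∧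
      Cs (Fin.last t) = delVert C v := by
  obtain ⟨t, es, Cs, h0, hstep, hlast⟩ :=
    lift_chordal V d C hC v hv hshed _ hD subset_rfl
  refine ⟨t, es, Cs, ?_, hstep, hlast⟩
  rw [h0]
  exact (decomp V d C hC v).symm

end ClutterPaper
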